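/- Let T₀ be an interval exchange transformation on [0, L) with intervals of continuity I₁, …, I_k, on each of which T₀ is a translation. Let λ ∈ (0, 1) and assume: (a) every point of [0, λL) returns to [0, λL) under forward iteration of T₀; (b) for each i, all points of λ·I_i = {λx : x ∈ I_i} have the same first-return time r_i to [0, λL), and for each 0 ≤ m < r_i there is an index j(i, m) with T₀^m(λ·I_i) ⊆ I_{j(i,m)}. Let v = (v₁, …, v_k) ∈ ℂᵏ and define the skew product T_v on [0, L) × ℂ by T_v(x, z) = (T₀(x), z + v_i) when x ∈ I_i. Let μ ∈ ℂ with |μ| < 1, set R_μ(x, z) = (λx, μz), and let 𝑇̂_v denote the first-return map of T_v to [0, λL) × ℂ. If 𝑇̂_v ∘ R_μ = R_μ ∘ T_v on [0, L) × ℂ, then the forward orbit {T_v^m(0, 0) : m ≥ 0} is a bounded subset of ℝ × ℂ. -/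

import Mathlib

open Set

theorem stmt_11
    (L : ℝ) (hL : 0 < L) (k : ℕ) (hk : 0 < k)
    -- the partition points 0 = x₀ < x₁ < ⋯ < x_k = L of the IET
    (pts : Fin (k + 1) → ℝ) (hmono : StrictMono pts)
    (hpts0 : pts 0 = 0) (hptsL : pts (Fin.last k) = L)
    -- the interval exchange transformation T₀
    (T₀ : ℝ → ℝ)
    (hbij : Set.BijOn T₀ (Set.Ico 0 L) (Set.Ico 0 L))
    (trans : Fin k → ℝ)
    (htrans : ∀ i : Fin k, ∀ x ∈ Set.Ico (pts i.castSucc) (pts i.succ), T₀ x = x + trans i)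
    -- the scaling factor λ
    (lam : ℝ) (hlam : lam ∈ Set.Ioo (0 : ℝ) 1)
    -- (a) every point of [0, λL) returns to [0, λL)
    (hreturn : ∀ y ∈ Set.Ico 0 (lam * L), ∃ m : ℕ, 1 ≤ m ∧ T₀^[m] y ∈ Set.Ico 0 (lam * L))
    -- (b) constant first-return times on each λ·Iᵢ, with itineraries within single intervals
    (r : Fin k → ℕ) (hr1 : ∀ i, 1 ≤ r i)
    (hrret : ∀ i : Fin k, ∀ x ∈ Set.Ico (pts i.castSucc) (pts i.succ),
      T₀^[r i] (lam * x) ∈ Set.Ico 0 (lam * L) ∧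
        ∀ m : ℕ, 1 ≤ m → m < r i → T₀^[m] (lam * x) ∉ Set.Ico 0 (lam * L))
    (j : Fin k → ℕ → Fin k)
    (hj : ∀ i : Fin k, ∀ m : ℕ, m < r i → ∀ x ∈ Set.Ico (pts i.castSucc) (pts i.succ),
      T₀^[m] (lam * x) ∈ Set.Ico (pts (j i m).castSucc) (pts (j i m).succ))
    -- the skew product T_v
    (v : Fin k → ℂ)
    (Tv : ℝ × ℂ → ℝ × ℂ)
    (hTv : ∀ i : Fin k, ∀ x ∈ Set.Ico (pts i.castSucc) (pts i.succ), ∀ z : ℂ,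
      Tv (x, z) = (T₀ x, z + v i))
    -- the contraction μ and the renormalization R_μ
    (μ : ℂ) (hμ : ‖μ‖ < 1)
    -- the first-return map of T_v to [0, λL) × ℂ
    (That : ℝ × ℂ → ℝ × ℂ)
    (hThat : ∀ p : ℝ × ℂ, p.1 ∈ Set.Ico 0 (lam * L) →
      ∃ m : ℕ, 1 ≤ m ∧ That p = Tv^[m] p ∧ (Tv^[m] p).1 ∈ Set.Ico 0 (lam * L) ∧
        ∀ m' : ℕ, 1 ≤ m' → m' < m → (Tv^[m'] p).1 ∉ Set.Ico 0 (lam * L))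
    -- the conjugacy 𝑇̂_v ∘ R_μ = R_μ ∘ T_v on [0, L) × ℂ
    (hconj : ∀ x ∈ Set.Ico (0 : ℝ) L, ∀ z : ℂ,
      That (lam * x, μ * z) = (lam * (Tv (x, z)).1, μ * (Tv (x, z)).2)) :
    Bornology.IsBounded {p : ℝ × ℂ | ∃ m : ℕ, p = Tv^[m] ((0 : ℝ), (0 : ℂ))} := by

  classical
  obtain ⟨hlam0, hlam1⟩ := hlam
  have hmem : ∀ x ∈ Set.Ico (0:ℝ) L, T₀ x ∈ Set.Ico 0 L := fun x hx => hbij.mapsTo hx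
  -- index lemma: every point of [0,L) lies in some interval of continuity
  have idx : ∀ x ∈ Set.Ico (0:ℝ) L, ∃ i : Fin k, x ∈ Set.Ico (pts i.castSucc) (pts i.succ) := by
    intro x hx
    have h0 : (0 : Fin (k+1)) ∈ Finset.univ.filter (fun j : Fin (k+1) => pts j ≤ x) := by
      simp [hpts0, hx.1]
    have hne : (Finset.univ.filter (fun j : Fin (k+1) => pts j ≤ x)).Nonempty := ⟨0, h0⟩
    set i := (Finset.univ.filter (fun j : Fin (k+1) => pts j ≤ x)).max' hne with hi
    have hile : pts i ≤ x := by
      have := Finset.max'_mem _ hne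
      rw [Finset.mem_filter] at this
      exact this.2
    have hlt : (i : ℕ) < k := by
      rcases lt_or_eq_of_le (Nat.lt_succ_iff.mp i.2) with h | h
      · exact h
      · exfalso
        have hieq : i = Fin.last k := Fin.ext h
        rw [hieq, hptsL] at hile
        exact absurd hx.2 (not_lt.mpr hile)
    have hcs : (Fin.castSucc ⟨(i:ℕ), hlt⟩ : Fin (k+1)) = i := rfl
    refine ⟨⟨(i:ℕ), hlt⟩, ?_, ?_⟩
    · rw [hcs]; exact hile
    · by_contra h
      push_neg at h
      have hmem2 : (Fin.succ ⟨(i:ℕ), hlt⟩ : Fin (k+1)) ∈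
          Finset.univ.filter (fun j : Fin (k+1) => pts j ≤ x) := by
        simp only [Finset.mem_filter, Finset.mem_univ, true_and]
        exact h
      have hle2 := Finset.le_max' _ _ hmem2
      rw [← hi] at hle2
      have := lt_of_lt_of_le (Fin.castSucc_lt_succ (i := (⟨(i:ℕ), hlt⟩ : Fin k))) hle2
      rw [hcs] at this
      exact lt_irrefl _ this
  set V := ∑ i, ‖(v i)‖ with hV
  have hVnn : 0 ≤ V := Finset.sum_nonneg fun i _ => norm_nonneg _
  have hVle : ∀ i, ‖(v i)‖ ≤ V := fun i =>
    Finset.single_le_sum (fun j _ => norm_nonneg _) (Finset.mem_univ i)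
  set R := ∑ i, r i with hR
  have hRle : ∀ i, r i ≤ R := fun i =>
    Finset.single_le_sum (fun j _ => Nat.zero_le _) (Finset.mem_univ i)
  have hTvp : ∀ p : ℝ × ℂ, p.1 ∈ Set.Ico (0:ℝ) L →
      ∃ i : Fin k, Tv p = (T₀ p.1, p.2 + v i) := by
    intro p hp
    obtain ⟨i, hi⟩ := idx p.1 hp
    refine ⟨i, ?_⟩
    have := hTv i p.1 hi p.2
    rwa [Prod.mk.eta] at this
  have hfst : ∀ (t : ℕ) (p : ℝ × ℂ), p.1 ∈ Set.Ico (0:ℝ) L → (Tv^[t] p).1 = T₀^[t] p.1 := by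
    intro t
    induction t with
    | zero => intro p _; rfl
    | succ t ih =>
      intro p hp
      obtain ⟨i, heq⟩ := hTvp p hp
      rw [Function.iterate_succ_apply, Function.iterate_succ_apply, heq]
      exact ih (T₀ p.1, p.2 + v i) (hmem _ hp)
  have h0D : (0:ℝ) ∈ Set.Ico (0:ℝ) L := ⟨le_refl 0, hL⟩
  set o : ℕ → ℝ × ℂ := fun n => Tv^[n] ((0:ℝ), (0:ℂ)) with ho
  have hTit : ∀ n, T₀^[n] (0:ℝ) ∈ Set.Ico (0:ℝ) L := by
    intro n
    induction n with
    | zero => exact h0D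
    | succ n ih => rw [Function.iterate_succ_apply']; exact hmem _ ih
  have hxD : ∀ n, (o n).1 ∈ Set.Ico (0:ℝ) L := by
    intro n
    have : (o n).1 = T₀^[n] 0 := hfst n _ h0D
    rw [this]; exact hTit n
  have hz_step : ∀ n, ‖(o (n+1)).2‖ ≤ ‖(o n).2‖ + V := by
    intro n
    obtain ⟨i, heq⟩ := hTvp (o n) (hxD n)
    have hsucc : o (n+1) = Tv (o n) := Function.iterate_succ_apply' Tv n _
    rw [hsucc, heq]
    calc ‖((o n).2 + v i)‖ ≤ ‖(o n).2‖ + ‖(v i)‖ :=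
          norm_add_le _ _
    _ ≤ ‖(o n).2‖ + V := by linarith [hVle i]
  have hz_blk : ∀ a t : ℕ, ‖(o (a+t)).2‖ ≤ ‖(o a).2‖ + t * V := by
    intro a t
    induction t with
    | zero => simp
    | succ t ih =>
      have h1 := hz_step (a+t)
      have h2 : a + (t+1) = (a+t)+1 := by omega
      rw [h2]
      push_cast
      calc ‖(o ((a+t)+1)).2‖ ≤ ‖(o (a+t)).2‖ + V := h1
      _ ≤ ‖(o a).2‖ + t * V + V := by linarith
      _ = ‖(o a).2‖ + (t + 1) * V := by ring
  have hconj_it : ∀ s, That^[s] ((0:ℝ),(0:ℂ)) = (lam * (o s).1, μ * (o s).2) := by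
    intro s
    induction s with
    | zero => simp [ho]
    | succ s ih =>
      rw [Function.iterate_succ_apply', ih]
      have h1 := hconj (o s).1 (hxD s) (o s).2
      rw [Prod.mk.eta] at h1
      rw [h1]
      have h2 : Tv (o s) = o (s+1) := (Function.iterate_succ_apply' Tv s _).symm
      rw [h2]
  set mf : ℝ × ℂ → ℕ := fun p =>
    if h : p.1 ∈ Set.Ico 0 (lam*L) then (hThat p h).choose else 1 with hmf
  set N : ℕ → ℕ := fun s =>
    Nat.rec 0 (fun s' n => n + mf (That^[s'] ((0:ℝ),(0:ℂ)))) s with hN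
  have hN0 : N 0 = 0 := rfl
  have hNsucc : ∀ s, N (s+1) = N s + mf (That^[s] ((0:ℝ),(0:ℂ))) := fun s => rfl
  have hstep : ∀ s, 1 ≤ mf (That^[s] ((0:ℝ),(0:ℂ))) ∧
      mf (That^[s] ((0:ℝ),(0:ℂ))) ≤ R ∧
      That^[s+1] ((0:ℝ),(0:ℂ)) = Tv^[mf (That^[s] ((0:ℝ),(0:ℂ)))] (That^[s] ((0:ℝ),(0:ℂ))) := by
    intro s
    have hq1 : (That^[s] ((0:ℝ),(0:ℂ))).1 = lam * (o s).1 := by rw [hconj_it s]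
    have hx := hxD s
    have hqmem : (That^[s] ((0:ℝ),(0:ℂ))).1 ∈ Set.Ico 0 (lam * L) := by
      rw [hq1]
      exact ⟨mul_nonneg hlam0.le hx.1, by nlinarith [hx.2]⟩
    have hqD : (That^[s] ((0:ℝ),(0:ℂ))).1 ∈ Set.Ico (0:ℝ) L :=
      ⟨hqmem.1, lt_trans hqmem.2 (by nlinarith)⟩
    have hmf_eq : mf (That^[s] ((0:ℝ),(0:ℂ))) = (hThat _ hqmem).choose := by
      rw [hmf]; simp only [dif_pos hqmem]
    obtain ⟨h1, h2, h3, h4⟩ := (hThat _ hqmem).choose_spec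
    obtain ⟨i, hi⟩ := idx (o s).1 hx
    have hri := hrret i (o s).1 hi
    have hretr : (Tv^[r i] (That^[s] ((0:ℝ),(0:ℂ)))).1 ∈ Set.Ico 0 (lam * L) := by
      rw [hfst _ _ hqD, hq1]
      exact hri.1
    have hle : (hThat _ hqmem).choose ≤ r i := by
      by_contra h
      push_neg at h
      exact h4 (r i) (hr1 i) h hretr
    refine ⟨hmf_eq ▸ h1, hmf_eq ▸ le_trans hle (hRle i), ?_⟩
    rw [Function.iterate_succ_apply', hmf_eq]
    exact h2
  have hNit : ∀ s, That^[s] ((0:ℝ),(0:ℂ)) = o (N s) := by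
    intro s
    induction s with
    | zero => rfl
    | succ s ih =>
      rw [(hstep s).2.2, ih, hNsucc, ho]
      rw [← Function.iterate_add_apply, Nat.add_comm, ih]
  have hNmono : ∀ s, N s < N (s+1) := fun s => by
    rw [hNsucc]; exact Nat.lt_add_of_pos_right (hstep s).1
  have hNgap : ∀ s, N (s+1) ≤ N s + R := fun s => by
    rw [hNsucc]; exact Nat.add_le_add_left (hstep s).2.1 _
  have hNge : ∀ s, s ≤ N s := by
    intro s
    induction s with
    | zero => exact Nat.zero_le _
    | succ s ih => exact Nat.succ_le_of_lt (Nat.lt_of_le_of_lt ih (hNmono s))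
  have hzN : ∀ s, (o (N s)).2 = μ * (o s).2 := by
    intro s
    rw [← hNit s, hconj_it s]
  have hμ' : 0 < 1 - ‖μ‖ := by linarith
  set C := R * V / (1 - ‖μ‖) with hC
  have hCnn : 0 ≤ C := div_nonneg (mul_nonneg (Nat.cast_nonneg _) hVnn) hμ'.le
  have hbound : ∀ n, ‖(o n).2‖ ≤ C := by
    intro n
    induction n using Nat.strong_induction_on with
    | _ n ih =>
      have hex : ∃ s, n < N s :=
        ⟨n+1, Nat.lt_of_lt_of_le (Nat.lt_succ_self n) (hNge (n+1))⟩
      set s := Nat.find hex - 1 with hs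
      have hfind := Nat.find_spec hex
      have hpos : 1 ≤ Nat.find hex := by
        by_contra h
        push_neg at h
        have h0 : Nat.find hex = 0 := by omega
        have := hfind
        rw [h0, hN0] at this
        omega
      have hsle : N s ≤ n := by
        have hmin : ¬ n < N s := Nat.find_min hex (by omega)
        omega
      have hs1 : n < N (s+1) := by
        have hseq : s + 1 = Nat.find hex := by omega
        rw [hseq]; exact hfind
      have hsn : s ≤ n := le_trans (hNge s) hsle
      have hub : ‖(o n).2‖ ≤
          ‖μ‖ * ‖(o s).2‖ + ((n - N s : ℕ) : ℝ) * V := by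
        have hb := hz_blk (N s) (n - N s)
        rw [Nat.add_sub_cancel' hsle, hzN s, norm_mul] at hb
        exact hb
      have hgap : (n - N s : ℕ) ≤ R := by
        have := hNgap s; omega
      have hgapR : ((n - N s : ℕ) : ℝ) ≤ (R : ℝ) := by exact_mod_cast hgap
      have habs := norm_nonneg (o s).2
      have hμnn := norm_nonneg μ
      rcases eq_or_lt_of_le hsn with h | h
      · have hNn : N s = n := le_antisymm hsle (h ▸ hNge s)
        have hz0 : (n - N s : ℕ) = 0 := by omega
        rw [← h]
        rw [hz0, ← h] at hub
        push_cast at hub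
        nlinarith [norm_nonneg (o s).2, hCnn, hμ', mul_nonneg hμ'.le hCnn]
      · have hIH := ih s h
        have hIH' : ‖(o s).2‖ * (1 - ‖μ‖) ≤ R * V := by
          rw [hC] at hIH
          exact (le_div_iff₀ hμ').mp hIH
        rw [hC, le_div_iff₀ hμ']
        nlinarith [mul_le_mul_of_nonneg_right hub hμ'.le,
          mul_le_mul_of_nonneg_left hIH' hμnn,
          mul_le_mul_of_nonneg_right (mul_le_mul_of_nonneg_right hgapR hVnn) hμ'.le,
          hμnn, hVnn, habs]
  have hsub : {p : ℝ × ℂ | ∃ m : ℕ, p = Tv^[m] ((0 : ℝ), (0 : ℂ))} ⊆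
      Set.Icc (0:ℝ) L ×ˢ Metric.closedBall (0:ℂ) C := by
    rintro p ⟨m, rfl⟩
    constructor
    · exact ⟨(hxD m).1, (hxD m).2.le⟩
    · have := hbound m
      simpa [Metric.mem_closedBall, Complex.dist_eq] using this
  exact ((Metric.isBounded_Icc (0:ℝ) L).prod Metric.isBounded_closedBall).subset hsub
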